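/- Let A be an n×n real symmetric positive definite matrix with positive semidefinite square root √A, and let X and Y be n×n real symmetric matrices satisfying (A⁻¹Y + YA⁻¹)/2 = X. Then Y is majorized by √A X √A. -/

import Mathlib

open Matrix

/-- `v` is majorized by `w`: for every `k`, the sum of the `k` largest entries of `v`
is at most the sum of the `k` largest entries of `w`, with equality for `k = n`.
Stated equivalently: every subset sum of `v` is dominated by some subset sum of `w`
of the same cardinality, and the total sums agree. -/
def VecMajorizedBy {ι : Type*} [Fintype ι] (v w : ι → ℝ) : Prop :=
  (∀ s : Finset ι, ∃ t : Finset ι, t.card = s.card ∧ ∑ i ∈ s, v i ≤ ∑ i ∈ t, w i) ∧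
    ∑ i, v i = ∑ i, w i

/-- `X` is majorized by `Y`: both are (real) symmetric and the eigenvalue vector of `X`
is majorized by the eigenvalue vector of `Y`. -/
def MatMajorizedBy {ι : Type*} [Fintype ι] [DecidableEq ι]
    (X Y : Matrix ι ι ℝ) : Prop :=
  ∃ (hX : X.IsHermitian) (hY : Y.IsHermitian),
    VecMajorizedBy hX.eigenvalues hY.eigenvalues

/-- The positive semidefinite square root of a positive semidefinite matrix
(the definition of `Matrix.PosSemidef.sqrt` from the older Mathlib, since removed). -/
noncomputable def Matrix.PosSemidef.sqrt {n : Type*} [Fintype n]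
    [DecidableEq n] {A : Matrix n n ℝ} (hA : A.PosSemidef) : Matrix n n ℝ :=
  hA.1.eigenvectorUnitary.1 * diagonal ((↑) ∘ (√·) ∘ hA.1.eigenvalues) *
  (star hA.1.eigenvectorUnitary : Matrix n n ℝ)

lemma aux_exists_subset_sum_ge {n : ℕ} (μ c : Fin n → ℝ) (k : ℕ)
    (hc0 : ∀ j, 0 ≤ c j) (hc1 : ∀ j, c j ≤ 1) (hsum : ∑ j, c j = k) :
    ∃ t : Finset (Fin n), t.card = k ∧ ∑ j, μ j * c j ≤ ∑ i ∈ t, μ i := by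
  have hkn : k ≤ n := by
    have : (k : ℝ) ≤ n := by
      rw [← hsum]
      calc ∑ j, c j ≤ ∑ _j : Fin n, (1:ℝ) := Finset.sum_le_sum fun j _ => hc1 j
        _ = n := by simp
    exact_mod_cast this
  rcases Nat.eq_zero_or_pos k with hk0 | hkpos
  · subst hk0
    have hc : ∀ j, c j = 0 := by
      intro j
      have := (Finset.sum_eq_zero_iff_of_nonneg (fun i _ => hc0 i)).mp (by simpa using hsum)
      exact this j (Finset.mem_univ j)
    exact ⟨∅, by simp, by simp [hc]⟩
  · -- pick a maximizer among card-k subsets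
    have hne : (Finset.univ.powersetCard k : Finset (Finset (Fin n))).Nonempty := by
      obtain ⟨t, hts, htc⟩ := Finset.exists_subset_card_eq (show k ≤ (Finset.univ : Finset (Fin n)).card from by simpa using hkn)
      exact ⟨t, Finset.mem_powersetCard.mpr ⟨hts, htc⟩⟩
    obtain ⟨t, htmem, htmax⟩ := Finset.exists_max_image _ (fun t => ∑ i ∈ t, μ i) hne
    have htc : t.card = k := (Finset.mem_powersetCard.mp htmem).2
    have htne : t.Nonempty := Finset.card_pos.mp (htc ▸ hkpos)
    refine ⟨t, htc, ?_⟩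
    set m : ℝ := t.inf' htne μ with hm
    have hmem_ge : ∀ i ∈ t, m ≤ μ i := fun i hi => Finset.inf'_le μ hi
    have hout_le : ∀ j ∉ t, μ j ≤ m := by
      intro j hj
      apply Finset.le_inf'
      intro i hi
      by_contra hlt
      push_neg at hlt
      -- swap i for j
      have hjmem : j ∉ t.erase i := fun h => hj (Finset.mem_of_mem_erase h)
      have hcard : (insert j (t.erase i)).card = k := by
        rw [Finset.card_insert_of_notMem hjmem, Finset.card_erase_of_mem hi, htc]
        omega
      have hmem' : insert j (t.erase i) ∈ Finset.univ.powersetCard k :=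
        Finset.mem_powersetCard.mpr ⟨Finset.subset_univ _, hcard⟩
      have := htmax _ hmem'
      rw [Finset.sum_insert hjmem] at this
      have herase : ∑ x ∈ t.erase i, μ x = ∑ x ∈ t, μ x - μ i := by
        rw [← Finset.add_sum_erase _ μ hi]; ring
      rw [herase] at this
      linarith
    -- main estimate
    have h1 : ∑ j ∈ t, μ j * c j ≤ ∑ j ∈ t, (μ j + m * (c j - 1)) := by
      apply Finset.sum_le_sum
      intro j hj
      have : μ j * (c j - 1) ≤ m * (c j - 1) :=
        mul_le_mul_of_nonpos_right (hmem_ge j hj) (by linarith [hc1 j])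
      nlinarith
    have h2 : ∑ j ∈ tᶜ, μ j * c j ≤ ∑ j ∈ tᶜ, m * c j := by
      apply Finset.sum_le_sum
      intro j hj
      exact mul_le_mul_of_nonneg_right (hout_le j (Finset.mem_compl.mp hj)) (hc0 j)
    have hsplit : ∑ j, μ j * c j = ∑ j ∈ t, μ j * c j + ∑ j ∈ tᶜ, μ j * c j :=
      (Finset.sum_add_sum_compl t _).symm
    have hcsplit : ∑ j ∈ t, c j + ∑ j ∈ tᶜ, c j = (k : ℝ) := by
      rw [Finset.sum_add_sum_compl t c, hsum]
    have e1 : ∑ j ∈ t, (μ j + m * (c j - 1)) =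
        ∑ j ∈ t, μ j + (m * (∑ j ∈ t, c j) - m * k) := by
      rw [Finset.sum_add_distrib, ← Finset.mul_sum, Finset.sum_sub_distrib,
        Finset.sum_const, htc, nsmul_eq_mul, mul_one, mul_sub]
    have e2 : ∑ j ∈ tᶜ, m * c j = m * ∑ j ∈ tᶜ, c j := (Finset.mul_sum _ _ _).symm
    have e3 : m * (∑ j ∈ t, c j) + m * (∑ j ∈ tᶜ, c j) = m * k := by
      rw [← mul_add, hcsplit]
    rw [hsplit]
    linarith

lemma aux_mul_submatrix {I J : Type*} [Fintype I] [Fintype J]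
    (M N : Matrix I I ℝ) (f : J → I) :
    M * (N.submatrix id f) = (M * N).submatrix id f := by
  ext i j; simp [Matrix.mul_apply]

lemma aux_submatrix_diagonal {I J : Type*} [Fintype I] [Fintype J] [DecidableEq I] [DecidableEq J]
    (N : Matrix I I ℝ) (d : I → ℝ) (f : J → I) :
    (N * diagonal d).submatrix id f = N.submatrix id f * diagonal (d ∘ f) := by
  ext i j
  simp [Matrix.mul_diagonal]

lemma aux_key {n : ℕ} (B Z : Matrix (Fin n) (Fin n) ℝ) (hZ : Z.IsHermitian)
    (N : Matrix (Fin n) (Fin n) ℝ) (hN : IsUnit N.det) (lam : Fin n → ℝ)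
    (hBN : B * N = N * diagonal lam)
    (hZB : Z = (2 : ℝ)⁻¹ • (B + Bᴴ)) (s : Finset (Fin n)) :
    ∃ t : Finset (Fin n), t.card = s.card ∧ ∑ i ∈ s, lam i ≤ ∑ i ∈ t, hZ.eigenvalues i := by
  classical
  set k := s.card with hkdef
  set f : {x // x ∈ s} → Fin n := fun j => (j : Fin n) with hfdef
  set W : Matrix (Fin n) {x // x ∈ s} ℝ := N.submatrix id f with hWdef
  -- injectivity of W as a linear map
  have hWinj : ∀ x : {x // x ∈ s} → ℝ, W *ᵥ x = 0 → x = 0 := by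
    intro x hx
    set x' : Fin n → ℝ := fun j => if h : j ∈ s then x ⟨j, h⟩ else 0 with hx'def
    have hNx' : N *ᵥ x' = W *ᵥ x := by
      ext i
      show ∑ j, N i j * x' j = ∑ j : {x // x ∈ s}, W i j * x j
      have h1 : ∑ j, N i j * x' j = ∑ j ∈ s, N i j * x' j :=
        (Finset.sum_subset (Finset.subset_univ s)
          (fun j _ hj => by simp [hx'def, hj])).symm
      have h2 : ∑ j ∈ s, N i j * x' j = ∑ j : {x // x ∈ s}, N i (↑j) * x' (↑j) :=
        (Finset.sum_coe_sort s (fun j => N i j * x' j)).symm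
      rw [h1, h2]
      refine Finset.sum_congr rfl fun j _ => ?_
      have : x' (↑j) = x j := by simp [hx'def, j.2]
      rw [this]
      rfl
    have hNinj : Function.Injective N.mulVec :=
      Matrix.mulVec_injective_iff_isUnit.mpr ((Matrix.isUnit_iff_isUnit_det N).mpr hN)
    have hx'0 : x' = 0 := by
      apply hNinj
      rw [hNx', hx, Matrix.mulVec_zero]
    funext j
    have := congrFun hx'0 (↑j : Fin n)
    simpa [hx'def, j.2] using this
  set G := Wᴴ * W with hGdef
  have hGher : G.IsHermitian := isHermitian_conjTranspose_mul_self W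
  have hGpd : G.PosDef := by
    rw [hGdef]; refine Matrix.PosDef.conjTranspose_mul_self W fun a b hab => ?_
    have := hWinj (a - b) (by rw [Matrix.mulVec_sub, hab, sub_self]); exact sub_eq_zero.mp this
  have hdetG : IsUnit G.det := isUnit_iff_ne_zero.mpr hGpd.det_pos.ne'
  have hGiG : G⁻¹ * G = 1 := Matrix.nonsing_inv_mul G hdetG
  have hGGi : G * G⁻¹ = 1 := Matrix.mul_nonsing_inv G hdetG
  set P := W * G⁻¹ * Wᴴ with hPdef
  have hPsym : Pᴴ = P := by
    rw [hPdef, conjTranspose_mul, conjTranspose_mul, conjTranspose_conjTranspose,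
      conjTranspose_nonsing_inv, hGher.eq, Matrix.mul_assoc]
  have hPP : P * P = P := by
    rw [hPdef]
    simp only [Matrix.mul_assoc]
    rw [← Matrix.mul_assoc Wᴴ W, ← hGdef, ← Matrix.mul_assoc G⁻¹ G, hGiG, Matrix.one_mul]
  have trP : P.trace = (k : ℝ) := by
    rw [hPdef, Matrix.trace_mul_comm (W * G⁻¹) Wᴴ, ← Matrix.mul_assoc, ← hGdef, hGGi,
      Matrix.trace_one, Fintype.card_coe]
  -- spectral data for Z
  set R : Matrix (Fin n) (Fin n) ℝ := (hZ.eigenvectorUnitary : Matrix (Fin n) (Fin n) ℝ)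
    with hRdef
  have hRunit : Rᴴ * R = 1 := by
    simpa [hRdef, star_eq_conjTranspose] using
      (Matrix.mem_unitaryGroup_iff').mp (hZ.eigenvectorUnitary).2
  have hRunit' : R * Rᴴ = 1 := by
    simpa [hRdef, star_eq_conjTranspose] using
      (Matrix.mem_unitaryGroup_iff).mp (hZ.eigenvectorUnitary).2
  have hZspec : Z = R * diagonal hZ.eigenvalues * Rᴴ := by
    have := hZ.spectral_theorem
    simpa [hRdef, RCLike.ofReal_real_eq_id, star_eq_conjTranspose] using this
  set c : Fin n → ℝ := fun j => (Rᴴ * P * R) j j with hcdef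
  have key : Rᴴ * P * R = (P * R)ᴴ * (P * R) := by
    rw [conjTranspose_mul, hPsym]
    simp only [Matrix.mul_assoc]
    rw [← Matrix.mul_assoc P P R, hPP]
  have hc0 : ∀ j, 0 ≤ c j := by
    intro j
    have h : c j = ∑ i, (P * R) i j * (P * R) i j := by
      show (Rᴴ * P * R) j j = _
      rw [key, Matrix.mul_apply]
      exact Finset.sum_congr rfl fun i _ => by rw [conjTranspose_apply, star_trivial]
    rw [h]
    exact Finset.sum_nonneg fun i _ => mul_self_nonneg _
  have hc1 : ∀ j, c j ≤ 1 := by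
    intro j
    set P' : Matrix (Fin n) (Fin n) ℝ := 1 - P with hP'def
    have hP'sym : P'ᴴ = P' := by
      rw [hP'def, conjTranspose_sub, conjTranspose_one, hPsym]
    have hP'P' : P' * P' = P' := by
      rw [hP'def, Matrix.sub_mul, Matrix.mul_sub, Matrix.mul_sub, Matrix.one_mul,
        Matrix.one_mul, Matrix.mul_one, hPP]
      abel
    have key' : Rᴴ * P' * R = (P' * R)ᴴ * (P' * R) := by
      rw [conjTranspose_mul, hP'sym]
      simp only [Matrix.mul_assoc]
      rw [← Matrix.mul_assoc P' P' R, hP'P']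
    have hval : (Rᴴ * P' * R) j j = 1 - c j := by
      rw [hP'def, Matrix.mul_sub, Matrix.mul_one, Matrix.sub_mul, Matrix.sub_apply, hRunit]
      rw [Matrix.one_apply_eq]
    have hnn : 0 ≤ (Rᴴ * P' * R) j j := by
      have h : (Rᴴ * P' * R) j j = ∑ i, (P' * R) i j * (P' * R) i j := by
        rw [key', Matrix.mul_apply]
        exact Finset.sum_congr rfl fun i _ => by rw [conjTranspose_apply, star_trivial]
      rw [h]
      exact Finset.sum_nonneg fun i _ => mul_self_nonneg _
    rw [hval] at hnn
    linarith
  have hsumc : ∑ j, c j = (k : ℝ) := by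
    have h1 : ∑ j, c j = (Rᴴ * P * R).trace := rfl
    rw [h1, Matrix.trace_mul_cycle, ← Matrix.mul_assoc, hRunit', Matrix.one_mul, trP]
  have htrPZ1 : (P * Z).trace = ∑ j, hZ.eigenvalues j * c j := by
    have h : P * Z = P * R * diagonal hZ.eigenvalues * Rᴴ := by
      conv_lhs => rw [hZspec]
      simp only [Matrix.mul_assoc]
    rw [h, Matrix.trace_mul_comm (P * R * diagonal hZ.eigenvalues) Rᴴ,
      ← Matrix.mul_assoc, ← Matrix.mul_assoc]
    show ∑ j, (Rᴴ * P * R * diagonal hZ.eigenvalues) j j = _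
    refine Finset.sum_congr rfl fun j _ => ?_
    rw [Matrix.mul_diagonal]
    exact mul_comm _ _
  have hBW : B * W = W * diagonal (lam ∘ f) := by
    rw [hWdef, aux_mul_submatrix, hBN, aux_submatrix_diagonal]
  have htrPB : (P * B).trace = ∑ i ∈ s, lam i := by
    have h : P * B = W * (G⁻¹ * (Wᴴ * B)) := by rw [hPdef]; simp only [Matrix.mul_assoc]
    rw [h, Matrix.trace_mul_comm W (G⁻¹ * (Wᴴ * B)), Matrix.mul_assoc, Matrix.mul_assoc,
      hBW, ← Matrix.mul_assoc Wᴴ W _, ← hGdef, ← Matrix.mul_assoc G⁻¹ G _, hGiG,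
      Matrix.one_mul, Matrix.trace_diagonal]
    exact Finset.sum_coe_sort s lam
  have htrPZ2 : (P * Z).trace = ∑ i ∈ s, lam i := by
    rw [hZB, Matrix.mul_smul, Matrix.trace_smul, Matrix.mul_add, Matrix.trace_add]
    have h1 : (P * Bᴴ).trace = (P * B).trace := by
      have e : P * Bᴴ = (B * Pᴴ)ᴴ := by
        rw [conjTranspose_mul, conjTranspose_conjTranspose]
      rw [e, Matrix.trace_conjTranspose, star_trivial, hPsym, Matrix.trace_mul_comm]
    rw [h1, htrPB]
    simp [smul_eq_mul]
    ring
  obtain ⟨t, htc, hle⟩ := aux_exists_subset_sum_ge hZ.eigenvalues c k hc0 hc1 hsumc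
  refine ⟨t, htc, ?_⟩
  have : ∑ i ∈ s, lam i = ∑ j, hZ.eigenvalues j * c j := htrPZ2.symm.trans htrPZ1
  linarith

lemma aux_trace_eq_sum_eigenvalues {n : ℕ} (Y : Matrix (Fin n) (Fin n) ℝ)
    (hY : Y.IsHermitian) : Y.trace = ∑ i, hY.eigenvalues i := by
  set Q : Matrix (Fin n) (Fin n) ℝ := (hY.eigenvectorUnitary : Matrix (Fin n) (Fin n) ℝ)
    with hQdef
  have hQunit : Qᴴ * Q = 1 := by
    simpa [hQdef, star_eq_conjTranspose] using
      (Matrix.mem_unitaryGroup_iff').mp (hY.eigenvectorUnitary).2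
  have hYspec : Y = Q * diagonal hY.eigenvalues * Qᴴ := by
    have := hY.spectral_theorem
    simpa [hQdef, RCLike.ofReal_real_eq_id, star_eq_conjTranspose] using this
  have h := congrArg Matrix.trace hYspec
  rw [Matrix.trace_mul_cycle, hQunit, one_mul, Matrix.trace_diagonal] at h
  exact h

/-- Harmonic–geometric mean majorization: if `A` is real symmetric positive definite and
`Y` solves the Lyapunov equation `(A⁻¹Y + YA⁻¹)/2 = X` with `X`, `Y` symmetric, then
`Y` is majorized by `√A * X * √A`. -/
theorem lyapunovInv_majorized_sqrt_quadratic {n : ℕ}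
    (A X Y : Matrix (Fin n) (Fin n) ℝ) (hA : A.PosDef)
    (hX : X.IsHermitian) (hY : Y.IsHermitian)
    (heq : (2 : ℝ)⁻¹ • (A⁻¹ * Y + Y * A⁻¹) = X) :
    MatMajorizedBy Y (Matrix.PosSemidef.sqrt hA.posSemidef * X * Matrix.PosSemidef.sqrt hA.posSemidef) := by
  classical
  set S := Matrix.PosSemidef.sqrt hA.posSemidef with hSdef
  have hS : S.IsHermitian := by
    simp [Matrix.IsHermitian, hSdef, Matrix.PosSemidef.sqrt, Matrix.mul_assoc,
      Matrix.star_eq_conjTranspose, Matrix.conjTranspose_eq_transpose_of_trivial]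
  have hSS : S * S = A := by
    have hU : (star hA.1.eigenvectorUnitary : Matrix _ _ ℝ) * hA.1.eigenvectorUnitary.1 = 1 := by
      simpa using (Matrix.mem_unitaryGroup_iff').mp hA.1.eigenvectorUnitary.2
    have hspec := hA.1.spectral_theorem
    simp only [hSdef, Matrix.PosSemidef.sqrt, Matrix.mul_assoc]
    rw [← Matrix.mul_assoc (star _ : Matrix _ _ ℝ) _ _, hU, Matrix.one_mul,
      ← Matrix.mul_assoc (diagonal _) (diagonal _), diagonal_mul_diagonal]
    conv_rhs => rw [hspec]
    simp [Matrix.mul_assoc, Real.mul_self_sqrt (hA.posSemidef.eigenvalues_nonneg _)]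
  have hdetS : IsUnit S.det := by
    have h : S.det * S.det = A.det := by rw [← det_mul, hSS]
    exact isUnit_iff_ne_zero.mpr (fun h0 => hA.det_pos.ne' (by rw [← h, h0, mul_zero]))
  have hAinv : A⁻¹ = S⁻¹ * S⁻¹ := by rw [← hSS, Matrix.mul_inv_rev]
  have hSAinv : S * A⁻¹ = S⁻¹ := by
    rw [hAinv, ← mul_assoc, Matrix.mul_nonsing_inv S hdetS, one_mul]
  have hAinvS : A⁻¹ * S = S⁻¹ := by
    rw [hAinv, mul_assoc, Matrix.nonsing_inv_mul S hdetS, mul_one]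
  set B := S⁻¹ * Y * S with hBdef
  have hBT : Bᴴ = S * Y * S⁻¹ := by
    rw [hBdef, conjTranspose_mul, conjTranspose_mul, conjTranspose_nonsing_inv,
      hS.eq, hY.eq, mul_assoc]
  set Z := S * X * S with hZdef
  have hZ : Z.IsHermitian := by
    rw [Matrix.IsHermitian, hZdef, conjTranspose_mul, conjTranspose_mul, hS.eq, hX.eq,
      mul_assoc]
  have hZB : Z = (2 : ℝ)⁻¹ • (B + Bᴴ) := by
    rw [hZdef, ← heq, Matrix.mul_smul, Matrix.smul_mul]
    rw [Matrix.mul_add, Matrix.add_mul, hBdef, hBT]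
    rw [← mul_assoc, ← mul_assoc, hSAinv, mul_assoc S Y _, mul_assoc S (Y * A⁻¹) _,
      mul_assoc Y A⁻¹ S, hAinvS, ← mul_assoc]
  -- spectral data for Y
  set Q : Matrix (Fin n) (Fin n) ℝ := (hY.eigenvectorUnitary : Matrix (Fin n) (Fin n) ℝ)
    with hQdef
  have hQunit : Qᴴ * Q = 1 := by
    simpa [hQdef, star_eq_conjTranspose] using
      (Matrix.mem_unitaryGroup_iff').mp (hY.eigenvectorUnitary).2
  have hQunit' : Q * Qᴴ = 1 := by
    simpa [hQdef, star_eq_conjTranspose] using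
      (Matrix.mem_unitaryGroup_iff).mp (hY.eigenvectorUnitary).2
  have hYspec : Y = Q * diagonal hY.eigenvalues * Qᴴ := by
    have := hY.spectral_theorem
    simpa [hQdef, RCLike.ofReal_real_eq_id, star_eq_conjTranspose] using this
  have hYQ : Y * Q = Q * diagonal hY.eigenvalues := by
    conv_lhs => rw [hYspec]
    rw [mul_assoc (Q * diagonal hY.eigenvalues) _ _, hQunit, mul_one]
  -- the similarity matrix
  set N : Matrix (Fin n) (Fin n) ℝ := S⁻¹ * Q with hNdef
  have hNinv : N * (Qᴴ * S) = 1 := by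
    rw [hNdef, mul_assoc, ← mul_assoc Q Qᴴ S, hQunit', one_mul,
      Matrix.nonsing_inv_mul S hdetS]
  have hdetN : IsUnit N.det := by
    refine IsUnit.of_mul_eq_one (a := N.det) (Qᴴ * S).det ?_
    rw [← det_mul, hNinv, det_one]
  have hBN : B * N = N * diagonal hY.eigenvalues := by
    rw [hBdef, hNdef]
    simp only [Matrix.mul_assoc]
    rw [← Matrix.mul_assoc S S⁻¹ Q, Matrix.mul_nonsing_inv S hdetS, one_mul, hYQ]
  -- traces
  have trY : Y.trace = ∑ i, hY.eigenvalues i := aux_trace_eq_sum_eigenvalues Y hY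
  have trZ : Z.trace = ∑ i, hZ.eigenvalues i := aux_trace_eq_sum_eigenvalues Z hZ
  have trYZ : Z.trace = Y.trace := by
    rw [hZB, Matrix.trace_smul, Matrix.trace_add]
    have h1 : Bᴴ.trace = B.trace := by
      rw [Matrix.trace_conjTranspose]; simp
    have h2 : B.trace = Y.trace := by
      rw [hBdef, Matrix.trace_mul_cycle, Matrix.mul_nonsing_inv S hdetS, one_mul]
    rw [h1, h2]
    simp [smul_eq_mul]; ring
  exact ⟨hY, hZ, fun s => aux_key B Z hZ N hdetN hY.eigenvalues hBN hZB s,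
    by rw [← trY, ← trZ, trYZ]⟩
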